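/- arXiv:1911.09970 — 2 statements merged into one kernel-verified Lean document; each statement's English description precedes it below -/
import Mathlib

section
/- Let M ≥ 1 and let m_1 ≥ m_2 ≥ … ≥ m_M ≥ 0 be a nonincreasing sequence with Σ_{i=1}^M m_i = 1 and m_i > 0 for all i appearing below. For 0 ≤ i < M define the residual set R_i = {m_{i+1}, …, m_M} and its Compressibility Index CI(R_i) = (Σ_{j=i+1}^M m_j)² / ((M−i) · Σ_{j=i+1}^M m_j²). Then for every d with 1 ≤ d ≤ M−1 and Σ_{j=d+1}^M m_j > 0, the oracle residual satisfies 1 − Σ_{i=1}^d m_i ≥ ∏_{i=0}^{d−1} (1 − 1/√((M−i)·CI(R_i))). -/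
/-- Compressibility Index of the residual set `R_i = {m_{i+1}, …, m_M}`:
`CI(R_i) = (Σ_{j=i+1}^M m_j)² / ((M−i) · Σ_{j=i+1}^M m_j²)`. -/
noncomputable def CIres (M : ℕ) (m : ℕ → ℝ) (i : ℕ) : ℝ :=
  (∑ j ∈ Finset.Icc (i + 1) M, m j) ^ 2 /
    (((M : ℝ) - i) * ∑ j ∈ Finset.Icc (i + 1) M, m j ^ 2)

/-- Oracle residual lower bound (18) of the paper: for a nonincreasing
sequence of positive reals `m_1 ≥ … ≥ m_M` summing to `1`, the oracle
residual after recovering the `d` largest coefficients satisfies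
`1 − Σ_{i=1}^d m_i ≥ ∏_{i=0}^{d−1} (1 − 1/√((M−i)·CI(R_i)))`. -/
theorem stmt8
    (M : ℕ) (hM : 1 ≤ M) (m : ℕ → ℝ)
    (hmono : ∀ i j, 1 ≤ i → i ≤ j → j ≤ M → m j ≤ m i)
    (hpos : ∀ i, 1 ≤ i → i ≤ M → 0 < m i)
    (hsum : ∑ i ∈ Finset.Icc 1 M, m i = 1)
    (d : ℕ) (hd1 : 1 ≤ d) (hdM : d ≤ M - 1)
    (htail : 0 < ∑ j ∈ Finset.Icc (d + 1) M, m j) :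
    1 - ∑ i ∈ Finset.Icc 1 d, m i ≥
      ∏ i ∈ Finset.range d,
        (1 - 1 / Real.sqrt (((M : ℝ) - i) * CIres M m i)) := by
  have hdM' : d < M := by omega
  set S : ℕ → ℝ := fun i => ∑ j ∈ Finset.Icc (i + 1) M, m j with hSdef
  set Q : ℕ → ℝ := fun i => ∑ j ∈ Finset.Icc (i + 1) M, m j ^ 2 with hQdef
  have hSpos : ∀ i, i < M → 0 < S i := by
    intro i hi
    apply Finset.sum_pos
    · intro j hj
      rw [Finset.mem_Icc] at hj
      exact hpos j (by omega) hj.2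
    · exact Finset.nonempty_Icc.mpr (by omega)
  have hQpos : ∀ i, i < M → 0 < Q i := by
    intro i hi
    apply Finset.sum_pos
    · intro j hj
      rw [Finset.mem_Icc] at hj
      exact pow_pos (hpos j (by omega) hj.2) 2
    · exact Finset.nonempty_Icc.mpr (by omega)
  -- value of the factor
  have hfval : ∀ i, i < M →
      1 - 1 / Real.sqrt (((M : ℝ) - i) * CIres M m i)
        = 1 - Real.sqrt (Q i) / S i := by
    intro i hi
    have hMi : (0:ℝ) < (M : ℝ) - i := by
      have : (i : ℝ) < M := by exact_mod_cast hi
      linarith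
    have hQ := hQpos i hi
    have hS := hSpos i hi
    have h1 : ((M : ℝ) - i) * CIres M m i = S i ^ 2 / Q i := by
      rw [CIres]
      change ((M : ℝ) - i) * (S i ^ 2 / (((M : ℝ) - i) * Q i)) = S i ^ 2 / Q i
      field_simp
    rw [h1, Real.sqrt_div (sq_nonneg (S i)), Real.sqrt_sq hS.le, one_div_div]
  -- largest residual coefficient bounds
  have hm_single : ∀ i, i < M → m (i + 1) ≤ S i := by
    intro i hi
    apply Finset.single_le_sum (f := m)
    · intro j hj
      rw [Finset.mem_Icc] at hj
      exact (hpos j (by omega) hj.2).le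
    · rw [Finset.mem_Icc]; omega
  have hm_sqrt : ∀ i, i < M → m (i + 1) ≤ Real.sqrt (Q i) := by
    intro i hi
    have h1 : m (i + 1) ^ 2 ≤ Q i := by
      apply Finset.single_le_sum (f := fun j => m j ^ 2)
      · intro j _; exact sq_nonneg _
      · rw [Finset.mem_Icc]; omega
    calc m (i + 1) = Real.sqrt (m (i + 1) ^ 2) :=
          (Real.sqrt_sq (hpos (i+1) (by omega) (by omega)).le).symm
      _ ≤ Real.sqrt (Q i) := Real.sqrt_le_sqrt h1
  have hQ_le : ∀ i, i < M → Q i ≤ S i ^ 2 := by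
    intro i hi
    have h1 : Q i ≤ m (i + 1) * S i := by
      rw [Finset.mul_sum]
      apply Finset.sum_le_sum
      intro j hj
      rw [Finset.mem_Icc] at hj
      have hj1 : m j ≤ m (i + 1) := hmono (i+1) j (by omega) hj.1 hj.2
      have hj0 : 0 ≤ m j := (hpos j (by omega) hj.2).le
      calc m j ^ 2 = m j * m j := sq (m j)
        _ ≤ m (i + 1) * m j := mul_le_mul_of_nonneg_right hj1 hj0
    calc Q i ≤ m (i + 1) * S i := h1
      _ ≤ S i * S i := mul_le_mul_of_nonneg_right (hm_single i hi) (hSpos i hi).le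
      _ = S i ^ 2 := (sq (S i)).symm
  have hsqrt_le : ∀ i, i < M → Real.sqrt (Q i) ≤ S i := by
    intro i hi
    calc Real.sqrt (Q i) ≤ Real.sqrt (S i ^ 2) := Real.sqrt_le_sqrt (hQ_le i hi)
      _ = S i := Real.sqrt_sq (hSpos i hi).le
  have hf_nonneg : ∀ i, i < M → 0 ≤ 1 - Real.sqrt (Q i) / S i := by
    intro i hi
    have := hSpos i hi
    have h1 : Real.sqrt (Q i) / S i ≤ 1 := by
      rw [div_le_one this]; exact hsqrt_le i hi
    linarith
  -- splitting of sums
  have hsplit : ∀ i, i < M → S i = m (i + 1) + S (i + 1) := by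
    intro i hi
    have h1 : Finset.Icc (i + 1) M = Finset.Ioc i M := Finset.Icc_add_one_left_eq_Ioc i M
    have h2 : Finset.Icc (i + 2) M = Finset.Ioc (i + 1) M := Finset.Icc_add_one_left_eq_Ioc (i+1) M
    have h3 := Finset.sum_Ioc_consecutive m (Nat.le_succ i) (by omega : i + 1 ≤ M)
    have h4 : Finset.Ioc i (i + 1) = {i + 1} := by
      ext x; simp only [Finset.mem_Ioc, Finset.mem_singleton]; omega
    simp only [hSdef, h1, h2, ← h3, h4, Finset.sum_singleton]
  have hstep : ∀ i, i < M → S i * (1 - Real.sqrt (Q i) / S i) ≤ S (i + 1) := by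
    intro i hi
    have hS := hSpos i hi
    have h1 : S i * (1 - Real.sqrt (Q i) / S i) = S i - Real.sqrt (Q i) := by
      field_simp
    rw [h1, hsplit i hi]
    have := hm_sqrt i hi
    linarith
  -- main induction
  have key : ∀ k, k ≤ d →
      (∏ i ∈ Finset.range k, (1 - Real.sqrt (Q i) / S i)) ≤ S k := by
    intro k
    induction k with
    | zero =>
      intro _
      simp only [Finset.range_zero, Finset.prod_empty]
      show (1:ℝ) ≤ ∑ j ∈ Finset.Icc (0 + 1) M, m j
      rw [show (0:ℕ) + 1 = 1 from rfl, hsum]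
    | succ k ih =>
      intro hk
      have hkM : k < M := by omega
      rw [Finset.prod_range_succ]
      calc (∏ i ∈ Finset.range k, (1 - Real.sqrt (Q i) / S i)) *
            (1 - Real.sqrt (Q k) / S k)
          ≤ S k * (1 - Real.sqrt (Q k) / S k) :=
            mul_le_mul_of_nonneg_right (ih (by omega)) (hf_nonneg k hkM)
        _ ≤ S (k + 1) := hstep k hkM
  -- conclude
  have hfinal : 1 - ∑ i ∈ Finset.Icc 1 d, m i = S d := by
    have h1 : (∑ i ∈ Finset.Ioc 0 d, m i) + ∑ i ∈ Finset.Ioc d M, m i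
        = ∑ i ∈ Finset.Ioc 0 M, m i :=
      Finset.sum_Ioc_consecutive m (Nat.zero_le d) hdM'.le
    have h2 : Finset.Icc 1 M = Finset.Ioc 0 M := Finset.Icc_add_one_left_eq_Ioc 0 M
    have h3 : Finset.Icc 1 d = Finset.Ioc 0 d := Finset.Icc_add_one_left_eq_Ioc 0 d
    have h4 : Finset.Icc (d + 1) M = Finset.Ioc d M := Finset.Icc_add_one_left_eq_Ioc d M
    have : (∑ i ∈ Finset.Icc 1 d, m i) + S d = 1 := by
      rw [← hsum, h2, h3, hSdef]
      simpa [h4] using h1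
    linarith
  rw [ge_iff_le, hfinal]
  calc (∏ i ∈ Finset.range d, (1 - 1 / Real.sqrt (((M : ℝ) - i) * CIres M m i)))
      = ∏ i ∈ Finset.range d, (1 - Real.sqrt (Q i) / S i) := by
        apply Finset.prod_congr rfl
        intro i hi
        rw [Finset.mem_range] at hi
        exact hfval i (by omega)
    _ ≤ S d := key d le_rfl
end

section
/- Let M ≥ 1 and let m_1 ≥ m_2 ≥ … ≥ m_M > 0 be a nonincreasing sequence with Σ_{i=1}^M m_i = 1. For 0 ≤ i < M define R_i = {m_{i+1}, …, m_M} and CI(R_i) = (Σ_{j=i+1}^M m_j)² / ((M−i) · Σ_{j=i+1}^M m_j²), and write CI(h) = CI(R_0). Fix d with 1 ≤ d ≤ M−1, and assume that for every i with 1 ≤ i ≤ d−1 one has CI(R_i) ≥ ((M−i+1)/(M−i)) · CI(R_{i−1}). Then 1 − Σ_{i=1}^d m_i ≥ (1 − 1/√(M · CI(h)))^d. (Note that M·CI(h) ≥ 1 always holds, so the base of the power is nonnegative.) -/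
/-- Geometric compressibility lower bound (19) of the paper: under the
assumption (20) that removing the largest element of the residual set
increases the Compressibility Index by at least the factor
`(M−i+1)/(M−i)`, the oracle residual satisfies
`1 − Σ_{i=1}^d m_i ≥ (1 − 1/√(M·CI(h)))^d`, where `CI(h) = CI(R_0)`. -/
theorem stmt9
    (M : ℕ) (hM : 1 ≤ M) (m : ℕ → ℝ)
    (hmono : ∀ i j, 1 ≤ i → i ≤ j → j ≤ M → m j ≤ m i)
    (hpos : ∀ i, 1 ≤ i → i ≤ M → 0 < m i)
    (hsum : ∑ i ∈ Finset.Icc 1 M, m i = 1)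
    (d : ℕ) (hd1 : 1 ≤ d) (hdM : d ≤ M - 1)
    (hCI : ∀ i, 1 ≤ i → i ≤ d - 1 →
      CIres M m i ≥ (((M : ℝ) - i + 1) / ((M : ℝ) - i)) * CIres M m (i - 1)) :
    1 - ∑ i ∈ Finset.Icc 1 d, m i ≥
      (1 - 1 / Real.sqrt (M * CIres M m 0)) ^ d := by
  have hdM' : d < M := by omega
  set T : ℕ → ℝ := fun i => ∑ j ∈ Finset.Icc (i + 1) M, m j with hTdef
  set Q : ℕ → ℝ := fun i => ∑ j ∈ Finset.Icc (i + 1) M, m j ^ 2 with hQdef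
  have hTpos : ∀ i, i < M → 0 < T i := by
    intro i hi
    apply Finset.sum_pos
    · intro j hj
      simp only [Finset.mem_Icc] at hj
      exact hpos j (by omega) hj.2
    · exact ⟨M, by simp [Finset.mem_Icc]; omega⟩
  have hQpos : ∀ i, i < M → 0 < Q i := by
    intro i hi
    apply Finset.sum_pos
    · intro j hj
      simp only [Finset.mem_Icc] at hj
      exact pow_pos (hpos j (by omega) hj.2) 2
    · exact ⟨M, by simp [Finset.mem_Icc]; omega⟩
  have hQle : ∀ i, Q i ≤ T i ^ 2 := by
    intro i
    have h1 : Q i ≤ ∑ j ∈ Finset.Icc (i + 1) M, m j * T i := by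
      apply Finset.sum_le_sum
      intro j hj
      have hjm := Finset.mem_Icc.mp hj
      have hmj : 0 < m j := hpos j (by omega) hjm.2
      have hle : m j ≤ T i := by
        apply Finset.single_le_sum (fun k hk => ?_) hj
        simp only [Finset.mem_Icc] at hk
        exact (hpos k (by omega) hk.2).le
      nlinarith
    calc Q i ≤ ∑ j ∈ Finset.Icc (i + 1) M, m j * T i := h1
      _ = T i * T i := by rw [← Finset.sum_mul]
      _ = T i ^ 2 := by ring
  have hsplit : ∀ i, i < M → T i = m (i + 1) + T (i + 1) := by
    intro i hi
    have h1 : Finset.Icc (i + 1) M = insert (i + 1) (Finset.Icc (i + 2) M) := by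
      ext x; simp only [Finset.mem_Icc, Finset.mem_insert]; omega
    show (∑ j ∈ Finset.Icc (i + 1) M, m j) = m (i + 1) + ∑ j ∈ Finset.Icc (i + 1 + 1) M, m j
    rw [h1, Finset.sum_insert (by simp only [Finset.mem_Icc]; omega)]
  have hstep : ∀ i, i < M → T i - Real.sqrt (Q i) ≤ T (i + 1) := by
    intro i hi
    have h1 : m (i + 1) ^ 2 ≤ Q i := by
      apply Finset.single_le_sum (fun k hk => sq_nonneg (m k))
      simp only [Finset.mem_Icc]; omega
    have h2 : m (i + 1) ≤ Real.sqrt (Q i) := by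
      have := Real.sqrt_le_sqrt h1
      rwa [Real.sqrt_sq (hpos (i + 1) (by omega) (by omega)).le] at this
    have := hsplit i hi
    linarith
  have hcCI : ∀ i, i < M → ((M : ℝ) - i) * CIres M m i = T i ^ 2 / Q i := by
    intro i hi
    have hMi : (0 : ℝ) < (M : ℝ) - i := by
      have : (i : ℝ) < M := by exact_mod_cast hi
      linarith
    have hQ := hQpos i hi
    show ((M : ℝ) - i) * (T i ^ 2 / (((M : ℝ) - i) * Q i)) = T i ^ 2 / Q i
    field_simp
  have hT0 : T 0 = 1 := hsum
  have hc0 : 1 ≤ T 0 ^ 2 / Q 0 := by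
    rw [one_le_div (hQpos 0 hM)]
    exact hQle 0
  have hmonoc : ∀ i, i ≤ d - 1 → T 0 ^ 2 / Q 0 ≤ T i ^ 2 / Q i := by
    intro i
    induction i with
    | zero => intro _; exact le_refl _
    | succ n ih =>
      intro h
      have hn : n ≤ d - 1 := by omega
      have hnM : n < M := by omega
      have hn1M : n + 1 < M := by omega
      have hCIn := hCI (n + 1) (by omega) h
      simp only [Nat.add_sub_cancel] at hCIn
      have hMi : (0 : ℝ) < (M : ℝ) - (n + 1) := by
        have : ((n : ℝ) + 1) < M := by exact_mod_cast hn1M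
        push_cast
        linarith
      have hkey : ((M : ℝ) - (n + 1)) * CIres M m (n + 1) ≥
          ((M : ℝ) - n) * CIres M m n := by
        have h2 : ((M : ℝ) - (n + 1)) * CIres M m (n + 1) ≥
            ((M : ℝ) - (n + 1)) * ((((M : ℝ) - (n + 1) + 1) / ((M : ℝ) - (n + 1))) *
              CIres M m n) := by
          apply mul_le_mul_of_nonneg_left _ hMi.le
          push_cast at hCIn ⊢
          linarith
        have h3 : ((M : ℝ) - (n + 1)) * ((((M : ℝ) - (n + 1) + 1) / ((M : ℝ) - (n + 1))) *
            CIres M m n) = ((M : ℝ) - n) * CIres M m n := by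
          rw [show ((M : ℝ) - (n + 1)) * ((((M : ℝ) - (n + 1) + 1) / ((M : ℝ) - (n + 1))) *
              CIres M m n) = ((((M : ℝ) - (n + 1) + 1) / ((M : ℝ) - (n + 1))) *
              ((M : ℝ) - (n + 1))) * CIres M m n from by ring,
            div_mul_cancel₀ _ hMi.ne']
          ring
        linarith [h2, h3.symm.le]
      have e1 := hcCI (n + 1) hn1M
      have e2 := hcCI n hnM
      push_cast at hkey e1 e2
      calc T 0 ^ 2 / Q 0 ≤ T n ^ 2 / Q n := ih hn
        _ ≤ T (n + 1) ^ 2 / Q (n + 1) := by push_cast; linarith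
  -- base
  have hbase : (M : ℝ) * CIres M m 0 = T 0 ^ 2 / Q 0 := by
    have := hcCI 0 (by omega)
    simpa using this
  rw [hbase]
  set c0 : ℝ := T 0 ^ 2 / Q 0 with hc0def
  have hs0 : 1 ≤ Real.sqrt c0 := Real.one_le_sqrt.mpr hc0
  have hb0 : 0 ≤ 1 - 1 / Real.sqrt c0 := by
    have : 1 / Real.sqrt c0 ≤ 1 := by
      rw [div_le_one (by linarith)]; exact hs0
    linarith
  have hmain : ∀ k, k ≤ d → (1 - 1 / Real.sqrt c0) ^ k ≤ T k := by
    intro k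
    induction k with
    | zero => intro _; simp [hT0]
    | succ n ih =>
      intro h
      have hn := ih (by omega)
      have hnM : n < M := by omega
      have hTn := hTpos n hnM
      have hQn := hQpos n hnM
      have hcn : c0 ≤ T n ^ 2 / Q n := hmonoc n (by omega)
      -- sqrt (T n ^2 / Q n) = T n / sqrt (Q n)
      have hsq : Real.sqrt (T n ^ 2 / Q n) = T n / Real.sqrt (Q n) := by
        rw [Real.sqrt_div (sq_nonneg (T n)), Real.sqrt_sq hTn.le]
      have hsQ : 0 < Real.sqrt (Q n) := Real.sqrt_pos.mpr hQn
      have hid : T n - Real.sqrt (Q n) = T n * (1 - 1 / Real.sqrt (T n ^ 2 / Q n)) := by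
        rw [hsq]
        field_simp
      have hfrac : 1 / Real.sqrt (T n ^ 2 / Q n) ≤ 1 / Real.sqrt c0 := by
        apply one_div_le_one_div_of_le (by linarith)
        exact Real.sqrt_le_sqrt hcn
      have hTb : T n * (1 - 1 / Real.sqrt c0) ≤ T n * (1 - 1 / Real.sqrt (T n ^ 2 / Q n)) := by
        apply mul_le_mul_of_nonneg_left _ hTn.le
        linarith
      have hpow : (1 - 1 / Real.sqrt c0) ^ (n + 1) ≤ T n * (1 - 1 / Real.sqrt c0) := by
        rw [pow_succ]
        exact mul_le_mul_of_nonneg_right hn hb0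
      have := hstep n hnM
      linarith
  have hfinal := hmain d le_rfl
  have hsum' : (∑ i ∈ Finset.Icc 1 d, m i) + T d = 1 := by
    rw [← hsum]
    show (∑ i ∈ Finset.Icc 1 d, m i) + ∑ j ∈ Finset.Icc (d + 1) M, m j
        = ∑ i ∈ Finset.Icc 1 M, m i
    rw [show Finset.Icc 1 d = Finset.Ioc 0 d from Finset.Icc_add_one_left_eq_Ioc 0 d,
        show Finset.Icc (d + 1) M = Finset.Ioc d M from Finset.Icc_add_one_left_eq_Ioc d M,
        show Finset.Icc 1 M = Finset.Ioc 0 M from Finset.Icc_add_one_left_eq_Ioc 0 M]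
    exact Finset.sum_Ioc_consecutive m (Nat.zero_le d) (le_of_lt hdM')
  linarith
end
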